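/- arXiv:2402.09714 — 3 statements merged into one kernel-verified Lean document; each statement's English description precedes it below -/
import Mathlib

section
/- Let W ∈ ℝ^{n×n} be symmetric, positive semidefinite, doubly stochastic with λ := ‖W − (1/n)𝟙𝟙ᵀ‖₂ < 1. Define η_w := 1/(1+√(1−λ²)), ρ̃_w := √η_w, Π := I_n − (1/n)𝟙𝟙ᵀ, Π̃ := diag(Π, Π) ∈ ℝ^{2n×2n}, and W̃ := [[(1+η_w)W, −η_w I_n], [I_n, 0]] ∈ ℝ^{2n×2n}. Then for every matrix A ∈ ℝ^{n×p} and every integer k ≥ 0, ‖Π̃ W̃^k Π̃ A_#‖² ≤ 14 · ρ̃_w^{2k} · ‖Π A‖², where A_# := (A; A) ∈ ℝ^{2n×p} stacks two copies of A and ‖·‖ denotes the Frobenius norm. -/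
open Matrix Finset

noncomputable section

/-- Spectral norm (ℓ₂ operator norm) of a real matrix. -/
def specNorm {m : Type*} [Fintype m] [DecidableEq m] (M : Matrix m m ℝ) : ℝ :=
  ‖LinearMap.toContinuousLinearMap (Matrix.toEuclideanLin M)‖

/-- Squared Frobenius norm of a real matrix. -/
def froSq {m q : Type*} [Fintype m] [Fintype q] (M : Matrix m q ℝ) : ℝ :=
  ∑ i, ∑ j, (M i j) ^ 2

/-- The matrix (1/n) 𝟙𝟙ᵀ with all entries 1/n. -/
def avgMatrix (n : ℕ) : Matrix (Fin n) (Fin n) ℝ := Matrix.of fun _ _ => (n : ℝ)⁻¹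

/-! ### Auxiliary material -/

set_option maxHeartbeats 2000000 in
/-- Scalar core of the LCA contraction: the two-step Chebyshev-type scalar recursion
with eigenvalue `μ ∈ [0, lam]` contracts like `η^k` with constant 14. -/
lemma lca_scalar_core (lam s η μ z : ℝ) (x : ℕ → ℝ)
    (hlam0 : 0 ≤ lam) (hlam1 : lam < 1) (hs : s = Real.sqrt (1 - lam ^ 2))
    (hη : η = 1 / (1 + s)) (hμ0 : 0 ≤ μ) (hμl : μ ≤ lam)
    (hx0 : x 0 = z) (hx1 : x 1 = z)
    (hrec : ∀ k, x (k + 2) = (1 + η) * μ * x (k + 1) - η * x k) :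
    ∀ k, (x (k + 1)) ^ 2 + (x k) ^ 2 ≤ 14 * η ^ k * z ^ 2 := by
  have hlam2 : lam ^ 2 < 1 := by nlinarith
  have hspos : 0 < s := by rw [hs]; exact Real.sqrt_pos.2 (by nlinarith)
  have hs2 : s ^ 2 = 1 - lam ^ 2 := by
    rw [hs]; exact Real.sq_sqrt (by nlinarith)
  have hs1 : s ≤ 1 := by nlinarith [hs2]
  have h1s : (0:ℝ) < 1 + s := by linarith
  have hηpos : 0 < η := by rw [hη]; positivity
  have hηs : η * (1 + s) = 1 := by rw [hη]; field_simp
  have h2s : (1 + η) * (1 + s) = 2 + s := by linear_combination hηs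
  have hFk : ∀ k, (x (k+1))^2 - (1+η)*μ*(x (k+1))*(x k) + η*(x k)^2
      = η ^ k * ((1+η)*(1-μ)*z^2) := by
    intro k
    induction k with
    | zero => rw [hx0, hx1]; ring
    | succ k ih =>
      rw [hrec k, pow_succ]
      linear_combination η * ih
  have e1 : (1+s)^2 * (4 * η - (1+η)^2 * μ^2) = 4*(1+s) - (2+s)^2 * μ^2 := by
    linear_combination (4*(1+s))*hηs - (μ^2*((1+η)*(1+s)+(2+s)))*h2s
  have hμl2 : μ^2 ≤ lam^2 := by nlinarith
  have hσpos : 0 < 4 * η - (1+η)^2 * μ^2 := by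
    have key : (1+s)^2 * (4 * η - (1+η)^2 * μ^2) ≥ (1+s) * (s^2 * (3+s)) := by
      rw [e1]; nlinarith [hμl2, hs2]
    nlinarith [key]
  have key1 : ∀ k, (4 * η - (1+η)^2 * μ^2) * (x (k+1))^2
      ≤ 4 * η * (η ^ k * ((1+η)*(1-μ)*z^2)) := by
    intro k
    rw [← hFk k]
    nlinarith [sq_nonneg ((1+η)*μ*(x (k+1)) - 2*η*(x k))]
  have key2 : ∀ k, (4 * η - (1+η)^2 * μ^2) * (x k)^2
      ≤ 4 * (η ^ k * ((1+η)*(1-μ)*z^2)) := by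
    intro k
    rw [← hFk k]
    nlinarith [sq_nonneg (2*(x (k+1)) - (1+η)*μ*(x k))]
  have hometric : 4 * (1+η)^2 * (1 - μ) ≤ 14 * (4 * η - (1+η)^2 * μ^2) := by
    have e2 : (1+s)^2 * (4 * (1+η)^2 * (1-μ)) = 4 * (2+s)^2 * (1-μ) := by
      linear_combination (4*(1-μ)*((1+η)*(1+s)+(2+s)))*h2s
    have hg : 4 * (2+s)^2 * (1-μ) ≤ 14 * (4*(1+s) - (2+s)^2 * μ^2) := by
      have hg0 : 4 * (2+s)^2 ≤ 56 * (1+s) := by nlinarith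
      have hlamlow : 1 - s^2 ≤ lam := by nlinarith
      have hglam : 4 * (2+s)^2 * (1-lam) ≤ 14 * (4*(1+s) - (2+s)^2 * lam^2) := by
        nlinarith [hs2, hlamlow, hspos, hs1]
      nlinarith [mul_nonneg (mul_nonneg hμ0 (sub_nonneg.2 hμl)) (sq_nonneg (2+s)),
        hg0, hglam, hμ0, hμl, hlam0]
    nlinarith [hg, e1, e2, sq_nonneg (1+s)]
  intro k
  have hηk : 0 < η ^ k := pow_pos hηpos k
  have hcomb : (4 * η - (1+η)^2 * μ^2) * ((x (k+1))^2 + (x k)^2)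
      ≤ η ^ k * (4 * (1+η) * ((1+η)*(1-μ)*z^2)) := by
    nlinarith [key1 k, key2 k]
  have hfin : 4 * (1+η) * ((1+η)*(1-μ)*z^2) ≤ 14 * (4 * η - (1+η)^2 * μ^2) * z^2 := by
    nlinarith [hometric, sq_nonneg z]
  have hmain : (4 * η - (1+η)^2 * μ^2) * ((x (k+1))^2 + (x k)^2)
      ≤ (4 * η - (1+η)^2 * μ^2) * (14 * η ^ k * z ^ 2) := by
    calc (4 * η - (1+η)^2 * μ^2) * ((x (k+1))^2 + (x k)^2)
        ≤ η ^ k * (4 * (1+η) * ((1+η)*(1-μ)*z^2)) := hcomb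
    _ ≤ η ^ k * (14 * (4 * η - (1+η)^2 * μ^2) * z^2) :=
        mul_le_mul_of_nonneg_left hfin (le_of_lt hηk)
    _ = (4 * η - (1+η)^2 * μ^2) * (14 * η ^ k * z ^ 2) := by ring
  exact le_of_mul_le_mul_left hmain hσpos

lemma specNorm_bound_aux {m : Type*} [Fintype m] [DecidableEq m] (M : Matrix m m ℝ) (v : m → ℝ) :
    ∑ i, (M.mulVec v i) ^ 2 ≤ (specNorm M) ^ 2 * ∑ i, (v i) ^ 2 := by
  set f := LinearMap.toContinuousLinearMap (Matrix.toEuclideanLin M) with hf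
  have h := f.le_opNorm ((WithLp.equiv 2 (m → ℝ)).symm v)
  have hfx : f ((WithLp.equiv 2 (m → ℝ)).symm v)
      = (WithLp.equiv 2 (m → ℝ)).symm (M *ᵥ v) := rfl
  rw [hfx] at h
  have hn1 : ‖(WithLp.equiv 2 (m → ℝ)).symm (M *ᵥ v)‖
      = Real.sqrt (∑ i, (M.mulVec v i) ^ 2) := by
    rw [EuclideanSpace.norm_eq]
    congr 1
    refine Finset.sum_congr rfl fun i _ => ?_
    rw [WithLp.equiv_symm_apply, PiLp.toLp_apply, Real.norm_eq_abs, sq_abs]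
  have hn2 : ‖(WithLp.equiv 2 (m → ℝ)).symm v‖ = Real.sqrt (∑ i, (v i) ^ 2) := by
    rw [EuclideanSpace.norm_eq]
    congr 1
    refine Finset.sum_congr rfl fun i _ => ?_
    rw [WithLp.equiv_symm_apply, PiLp.toLp_apply, Real.norm_eq_abs, sq_abs]
  rw [hn1, hn2] at h
  have h1 : (0:ℝ) ≤ ∑ i, (M.mulVec v i) ^ 2 := by positivity
  have h2 : (0:ℝ) ≤ ∑ i, (v i) ^ 2 := by positivity
  calc ∑ i, (M.mulVec v i) ^ 2 = (Real.sqrt (∑ i, (M.mulVec v i) ^ 2)) ^ 2 :=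
        (Real.sq_sqrt h1).symm
  _ ≤ (‖f‖ * Real.sqrt (∑ i, (v i) ^ 2)) ^ 2 := by
      apply pow_le_pow_left₀ (Real.sqrt_nonneg _) h
  _ = (specNorm M) ^ 2 * ∑ i, (v i) ^ 2 := by
      rw [mul_pow, Real.sq_sqrt h2, specNorm, ← hf]

lemma froSq_eq_trace_aux {m q : Type*} [Fintype m] [Fintype q] (M : Matrix m q ℝ) :
    froSq M = Matrix.trace (Mᵀ * M) := by
  unfold froSq Matrix.trace
  rw [Finset.sum_comm]
  refine Finset.sum_congr rfl fun j _ => ?_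
  simp [Matrix.mul_apply, Matrix.diag, pow_two]

lemma froSq_mul_orth_aux {m q : Type*} [Fintype m] [Fintype q] [DecidableEq m]
    (V : Matrix m m ℝ) (hV : Vᵀ * V = 1) (M : Matrix m q ℝ) :
    froSq (V * M) = froSq M := by
  rw [froSq_eq_trace_aux, froSq_eq_trace_aux, Matrix.transpose_mul, Matrix.mul_assoc,
    ← Matrix.mul_assoc Vᵀ V M, hV, Matrix.one_mul]

lemma froSq_fromRows_aux {m₁ m₂ q : Type*} [Fintype m₁] [Fintype m₂] [Fintype q]
    (M₁ : Matrix m₁ q ℝ) (M₂ : Matrix m₂ q ℝ) :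
    froSq (Matrix.fromRows M₁ M₂) = froSq M₁ + froSq M₂ := by
  unfold froSq
  rw [Fintype.sum_sum_type]
  rfl

/-- auxiliary two-step recursive sequence for the LCA iteration -/
def lcaX {n p : ℕ} (W : Matrix (Fin n) (Fin n) ℝ) (η : ℝ)
    (Y : Matrix (Fin n) (Fin p) ℝ) : ℕ → Matrix (Fin n) (Fin p) ℝ
  | 0 => Y
  | 1 => Y
  | (k+2) => (1 + η) • (W * lcaX W η Y (k+1)) - η • lcaX W η Y k

set_option maxHeartbeats 4000000 in
/-- the Loopless Chebyshev Acceleration contraction property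
(Lemma 11 in Song et al. / Lemma 1 in the paper). -/
theorem lca_contraction (n p : ℕ) (hn : 0 < n) (hp : 0 < p)
    (W : Matrix (Fin n) (Fin n) ℝ)
    (hWsymm : W.IsSymm) (hWpsd : W.PosSemidef)
    (hWnonneg : ∀ i j, 0 ≤ W i j)
    (hWrow : ∀ i, ∑ j, W i j = 1) (hWcol : ∀ j, ∑ i, W i j = 1)
    (lam : ℝ) (hlam : lam = specNorm (W - avgMatrix n)) (hlam1 : lam < 1)
    (ηw ρw : ℝ)
    (hηw : ηw = 1 / (1 + Real.sqrt (1 - lam ^ 2)))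
    (hρw : ρw = Real.sqrt ηw)
    -- Π := Iₙ − (1/n) 𝟙𝟙ᵀ,  Π̃ := diag(Π, Π),  W̃ the augmented LCA matrix
    (Pi : Matrix (Fin n) (Fin n) ℝ) (hPi : Pi = 1 - avgMatrix n)
    (Pit : Matrix (Fin n ⊕ Fin n) (Fin n ⊕ Fin n) ℝ)
    (hPit : Pit = Matrix.fromBlocks Pi 0 0 Pi)
    (Wt : Matrix (Fin n ⊕ Fin n) (Fin n ⊕ Fin n) ℝ)
    (hWt : Wt = Matrix.fromBlocks ((1 + ηw) • W) ((-ηw) • 1) 1 0) :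
    ∀ (A : Matrix (Fin n) (Fin p) ℝ) (k : ℕ),
      froSq (Pit * Wt ^ k * Pit * Matrix.of (Sum.elim A A))
        ≤ 14 * ρw ^ (2 * k) * froSq (Pi * A) := by
  intro A k
  -- basic scalar facts
  have hlam0 : 0 ≤ lam := hlam ▸ norm_nonneg _
  have hηpos : 0 < ηw := by
    rw [hηw]
    have : 0 ≤ Real.sqrt (1 - lam ^ 2) := Real.sqrt_nonneg _
    positivity
  have hρη : ρw ^ (2 * k) = ηw ^ k := by
    rw [hρw, pow_mul, Real.sq_sqrt hηpos.le]
  -- matrix algebra facts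
  have hn' : (n : ℝ) ≠ 0 := Nat.cast_ne_zero.2 hn.ne'
  set J := avgMatrix n with hJ
  have hJJ : J * J = J := by
    ext i j
    simp only [hJ, avgMatrix, Matrix.mul_apply, Matrix.of_apply]
    rw [Finset.sum_const, Finset.card_univ, Fintype.card_fin, nsmul_eq_mul]
    field_simp
  have hWJ : W * J = J := by
    ext i j
    simp only [hJ, avgMatrix, Matrix.mul_apply, Matrix.of_apply]
    rw [← Finset.sum_mul, hWrow i, one_mul]
  have hJW : J * W = J := by
    ext i j
    simp only [hJ, avgMatrix, Matrix.mul_apply, Matrix.of_apply]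
    rw [← Finset.mul_sum, hWcol j, mul_one]
  have hPiPi : Pi * Pi = Pi := by
    rw [hPi, Matrix.sub_mul, Matrix.one_mul, Matrix.mul_sub, Matrix.mul_one, hJJ]
    abel
  have hPiW : Pi * W = W * Pi := by
    rw [hPi, Matrix.sub_mul, Matrix.mul_sub, Matrix.one_mul, Matrix.mul_one, hJW, hWJ]
  have hJPi : J * Pi = 0 := by
    rw [hPi, Matrix.mul_sub, Matrix.mul_one, hJJ, sub_self]
  have hPisym : ∀ a b, Pi a b = Pi b a := by
    intro a b
    rw [hPi]
    by_cases hab : a = b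
    · subst hab; rfl
    · simp only [Matrix.sub_apply, Matrix.one_apply, if_neg hab, if_neg (Ne.symm hab)]
      rfl
  set Y := Pi * A with hY
  set X := lcaX W ηw Y with hX
  have hX0 : X 0 = Y := rfl
  have hX1 : X 1 = Y := rfl
  have hXrec : ∀ m, X (m+2) = (1 + ηw) • (W * X (m+1)) - ηw • X m := fun m => rfl
  -- reduce the block matrix expression to the sequence X
  have hstep0 : Pit * Matrix.of (Sum.elim A A) = Matrix.fromRows Y Y := by
    have : Matrix.of (Sum.elim A A) = Matrix.fromRows A A := rfl
    rw [this, hPit, Matrix.fromBlocks_mul_fromRows]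
    simp [hY]
  have hblock : ∀ m, Wt ^ m * (Pit * Matrix.of (Sum.elim A A))
      = Matrix.fromRows (X (m+1)) (X m) := by
    intro m
    induction m with
    | zero => rw [pow_zero, Matrix.one_mul, hstep0, hX0, hX1]
    | succ m ih =>
      rw [pow_succ', Matrix.mul_assoc, ih, hWt, Matrix.fromBlocks_mul_fromRows,
        hXrec m, Matrix.smul_mul, Matrix.smul_mul, Matrix.one_mul, Matrix.one_mul,
        Matrix.zero_mul, add_zero, neg_smul, sub_eq_add_neg]
  have hPiX : ∀ m, Pi * X m = X m := by
    have key : ∀ m, Pi * X m = X m ∧ Pi * X (m+1) = X (m+1) := by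
      intro m
      induction m with
      | zero =>
        constructor <;>
          · show Pi * (Pi * A) = Pi * A
            rw [← Matrix.mul_assoc, hPiPi]
      | succ m ih =>
        refine ⟨ih.2, ?_⟩
        rw [hXrec m, Matrix.mul_sub, Matrix.mul_smul, Matrix.mul_smul,
          ← Matrix.mul_assoc, hPiW, Matrix.mul_assoc, ih.2, ih.1]
    exact fun m => (key m).1
  have hred : Pit * Wt ^ k * Pit * Matrix.of (Sum.elim A A)
      = Matrix.fromRows (X (k+1)) (X k) := by
    calc Pit * Wt ^ k * Pit * Matrix.of (Sum.elim A A)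
        = Pit * (Wt ^ k * (Pit * Matrix.of (Sum.elim A A))) := by
          rw [Matrix.mul_assoc, Matrix.mul_assoc]
    _ = Pit * Matrix.fromRows (X (k+1)) (X k) := by rw [hblock k]
    _ = Matrix.fromRows (Pi * X (k+1) + (0 : Matrix (Fin n) (Fin n) ℝ) * X k)
          ((0 : Matrix (Fin n) (Fin n) ℝ) * X (k+1) + Pi * X k) := by
          rw [hPit, Matrix.fromBlocks_mul_fromRows]
    _ = Matrix.fromRows (X (k+1)) (X k) := by
          rw [Matrix.zero_mul, Matrix.zero_mul, add_zero, zero_add, hPiX, hPiX]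
  rw [hred, froSq_fromRows_aux, hρη]
  -- spectral decomposition
  have hH : W.IsHermitian := hWpsd.1
  set U : Matrix (Fin n) (Fin n) ℝ := (Matrix.IsHermitian.eigenvectorUnitary hH : Matrix (Fin n) (Fin n) ℝ) with hU
  set V : Matrix (Fin n) (Fin n) ℝ := star U with hV
  have hUV : U * V = 1 := by
    rw [hV]
    exact (Matrix.mem_unitaryGroup_iff).mp (Matrix.IsHermitian.eigenvectorUnitary hH).2
  have hVtV : Vᵀ * V = 1 := by
    have : Vᵀ = U := by
      rw [hV, Matrix.star_eq_conjTranspose, Matrix.conjTranspose_eq_transpose_of_trivial,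
        Matrix.transpose_transpose]
    rw [this, hUV]
  set μ : Fin n → ℝ := hH.eigenvalues with hμdef
  have hVW : V * W = Matrix.diagonal μ * V := by
    have h1 : V * W * U = Matrix.diagonal μ := by
      have : (star (Matrix.IsHermitian.eigenvectorUnitary hH : Matrix (Fin n) (Fin n) ℝ)) * W
          * (Matrix.IsHermitian.eigenvectorUnitary hH : Matrix (Fin n) (Fin n) ℝ)
          = Matrix.diagonal (RCLike.ofReal ∘ hH.eigenvalues) := by
        have h := Matrix.IsHermitian.conjStarAlgAut_star_eigenvectorUnitary hH
        rwa [Unitary.conjStarAlgAut_apply, Unitary.coe_star, star_star] at h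
      rw [← hU, ← hV] at this
      rw [this, RCLike.ofReal_real_eq_id]
      rfl
    calc V * W = V * W * (U * V) := by rw [hUV, Matrix.mul_one]
    _ = (V * W * U) * V := by rw [Matrix.mul_assoc (V * W), Matrix.mul_assoc]
    _ = Matrix.diagonal μ * V := by rw [h1]
  have hμ0 : ∀ i, 0 ≤ μ i := fun i => hWpsd.eigenvalues_nonneg i
  -- entrywise recursion after transforming by V
  have hVXrec : ∀ m i j, (V * X (m+2)) i j
      = (1 + ηw) * μ i * ((V * X (m+1)) i j) - ηw * ((V * X m) i j) := by
    intro m i j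
    have : V * X (m+2) = (1 + ηw) • (Matrix.diagonal μ * (V * X (m+1))) - ηw • (V * X m) := by
      rw [hXrec m, Matrix.mul_sub, Matrix.mul_smul, Matrix.mul_smul,
        ← Matrix.mul_assoc, hVW, Matrix.mul_assoc]
    rw [this]
    simp only [Matrix.sub_apply, Matrix.smul_apply, Matrix.diagonal_mul, smul_eq_mul]
    ring
  -- rows of V with large eigenvalue are killed by Y
  have hbig : ∀ i, lam < μ i → ∀ j, (V * Y) i j = 0 := by
    intro i hμbig j
    set v : Fin n → ℝ := fun l => V i l with hv
    have hWv : W *ᵥ v = μ i • v := by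
      funext l
      have h1 : (V * W) i l = (Matrix.diagonal μ * V) i l := by rw [hVW]
      rw [Matrix.mul_apply, Matrix.diagonal_mul] at h1
      show ∑ t, W l t * v t = μ i * v l
      calc ∑ t, W l t * v t = ∑ t, v t * W t l := by
            refine Finset.sum_congr rfl fun t _ => ?_
            rw [mul_comm]
            congr 1
            have := hWsymm
            rw [Matrix.IsSymm] at this
            calc W l t = Wᵀ t l := rfl
            _ = W t l := by rw [this]
      _ = μ i * v l := h1
    set w : Fin n → ℝ := Pi *ᵥ v with hw
    have hmw : (W - J) *ᵥ w = μ i • w := by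
      rw [hw, Matrix.mulVec_mulVec]
      have : (W - J) * Pi = Pi * W := by
        rw [Matrix.sub_mul, hJPi, sub_zero, hPiW]
      rw [this, ← Matrix.mulVec_mulVec, hWv, Matrix.mulVec_smul]
    have hspec := specNorm_bound_aux (W - J) w
    rw [hmw] at hspec
    have hsum : ∑ l, (μ i • w) l ^ 2 = μ i ^ 2 * ∑ l, (w l) ^ 2 := by
      rw [Finset.mul_sum]
      refine Finset.sum_congr rfl fun l _ => ?_
      simp [mul_pow]
    rw [hsum, ← hlam] at hspec
    have hwzero : ∀ l, w l = 0 := by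
      have hsq : (0:ℝ) ≤ ∑ l, (w l) ^ 2 := by positivity
      have hlt : lam ^ 2 < μ i ^ 2 := by nlinarith
      have : ∑ l, (w l) ^ 2 ≤ 0 := by nlinarith
      intro l
      have h0 : ∑ l, (w l) ^ 2 = 0 := le_antisymm this hsq
      have := Finset.sum_eq_zero_iff_of_nonneg
        (fun l _ => sq_nonneg (w l)) |>.mp h0 l (Finset.mem_univ l)
      exact pow_eq_zero_iff (n := 2) (by norm_num) |>.mp this
    -- now (V * Y) i j = ∑ m w m * A m j = 0
    have : (V * Y) i j = ∑ m, w m * A m j := by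
      rw [hY, ← Matrix.mul_assoc, Matrix.mul_apply]
      refine Finset.sum_congr rfl fun m _ => ?_
      congr 1
      rw [Matrix.mul_apply, hw, Matrix.mulVec]
      show ∑ t, V i t * Pi t m = _
      rw [dotProduct]
      refine Finset.sum_congr rfl fun t _ => ?_
      rw [hPisym t m, mul_comm]
    rw [this]
    exact Finset.sum_eq_zero fun m _ => by rw [hwzero m, zero_mul]
  -- the per-entry bound
  have hentry : ∀ i j, ((V * X (k+1)) i j) ^ 2 + ((V * X k) i j) ^ 2
      ≤ 14 * ηw ^ k * ((V * Y) i j) ^ 2 := by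
    intro i j
    rcases le_or_gt (μ i) lam with hle | hgt
    · exact lca_scalar_core lam (Real.sqrt (1 - lam ^ 2)) ηw (μ i) ((V * Y) i j)
        (fun m => (V * X m) i j) hlam0 hlam1 rfl hηw (hμ0 i) hle rfl rfl
        (fun m => hVXrec m i j) k
    · have hz := hbig i hgt j
      have hzero : ∀ m, (V * X m) i j = 0 := by
        have key : ∀ m, (V * X m) i j = 0 ∧ (V * X (m+1)) i j = 0 := by
          intro m
          induction m with
          | zero => exact ⟨hz, hz⟩
          | succ m ih =>
            refine ⟨ih.2, ?_⟩
            rw [hVXrec m i j, ih.1, ih.2]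
            ring
        exact fun m => (key m).1
      rw [hzero, hzero, hz]
      norm_num
  -- sum up
  rw [← froSq_mul_orth_aux V hVtV (X (k+1)), ← froSq_mul_orth_aux V hVtV (X k),
    ← froSq_mul_orth_aux V hVtV Y]
  unfold froSq
  rw [← Finset.sum_add_distrib, Finset.mul_sum]
  refine Finset.sum_le_sum fun i _ => ?_
  rw [← Finset.sum_add_distrib, Finset.mul_sum]
  exact Finset.sum_le_sum fun j _ => hentry i j
end
end

section
/- Let a, c ≥ 0 and b > 0, and let (s_t)_{t≥0} and (q_t)_{t≥0} be nonnegative real sequences such that s_{t+1} ≤ (1+a)s_t − b q_t + c for every t ≥ 0. Then for every integer T ≥ 1, min_{t=0,…,T−1} q_t ≤ ((1+a)^T/(bT)) s_0 + c/b. -/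
/-- Lemma 12 in the paper, from Mishchenko et al.:
if `s_{t+1} ≤ (1+a) s_t − b q_t + c`, then
`min_{t < T} q_t ≤ (1+a)^T / (bT) · s_0 + c / b`. -/
theorem min_bound_of_recursion (a b c : ℝ) (ha : 0 ≤ a) (hb : 0 < b) (hc : 0 ≤ c)
    (s q : ℕ → ℝ) (hs : ∀ t, 0 ≤ s t) (hq : ∀ t, 0 ≤ q t)
    (hrec : ∀ t, s (t + 1) ≤ (1 + a) * s t - b * q t + c)
    (T : ℕ) (hT : 1 ≤ T) :
    (Finset.range T).inf' (Finset.nonempty_range_iff.mpr (by omega)) q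
      ≤ (1 + a) ^ T / (b * T) * s 0 + c / b := by
  have ha1 : (0:ℝ) ≤ 1 + a := by linarith
  have ha1' : (1:ℝ) ≤ 1 + a := by linarith
  set m := (Finset.range T).inf' (Finset.nonempty_range_iff.mpr (by omega)) q with hm
  have hm0 : 0 ≤ m := Finset.le_inf' _ _ fun t _ => hq t
  have hmle : ∀ t ∈ Finset.range T, m ≤ q t := fun t ht => Finset.inf'_le q ht
  have key : ∀ n : ℕ, s n + b * ∑ t ∈ Finset.range n, (1+a)^(n-1-t) * q t
      ≤ (1+a)^n * s 0 + c * ∑ k ∈ Finset.range n, (1+a)^k := by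
    intro n
    induction n with
    | zero => simp
    | succ n ih =>
      have h1 := hrec n
      have hsum : ∑ t ∈ Finset.range (n+1), (1+a)^(n+1-1-t) * q t
          = (1+a) * ∑ t ∈ Finset.range n, (1+a)^(n-1-t) * q t + q n := by
        rw [Finset.sum_range_succ, Finset.mul_sum]
        congr 1
        · apply Finset.sum_congr rfl
          intro t ht
          rw [Finset.mem_range] at ht
          rw [← mul_assoc, ← pow_succ']
          congr 2
          omega
        · simp
      have hgeom : ∑ k ∈ Finset.range (n+1), (1+a)^k
          = (1+a) * ∑ k ∈ Finset.range n, (1+a)^k + 1 := by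
        rw [Finset.sum_range_succ', Finset.mul_sum]
        simp [pow_succ']
      have hmul := mul_le_mul_of_nonneg_left ih ha1
      rw [hsum, hgeom]
      have hpow : (1+a)^(n+1) = (1+a) * (1+a)^n := by ring
      rw [hpow]
      nlinarith [hq n, hs n]
  have hP : (0:ℝ) ≤ (1+a)^T * s 0 := mul_nonneg (pow_nonneg ha1 T) (hs 0)
  set S := ∑ k ∈ Finset.range T, (1+a)^k with hS
  have hTS : (T:ℝ) ≤ S := by
    calc (T:ℝ) = ∑ _k ∈ Finset.range T, (1:ℝ) := by simp
    _ ≤ S := Finset.sum_le_sum fun k _ => one_le_pow₀ ha1'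
  have hT0 : (0:ℝ) < T := by exact_mod_cast hT
  have hreflect : ∑ t ∈ Finset.range T, (1+a)^(T-1-t) = S := by
    rw [hS]
    exact Finset.sum_range_reflect (fun k => (1+a)^k) T
  have hQ : m * S ≤ ∑ t ∈ Finset.range T, (1+a)^(T-1-t) * q t := by
    rw [← hreflect, Finset.mul_sum]
    apply Finset.sum_le_sum
    intro t ht
    rw [mul_comm m _]
    exact mul_le_mul_of_nonneg_left (hmle t ht) (pow_nonneg ha1 _)
  have hkey := key T
  have hmain : b * (m * S) ≤ (1+a)^T * s 0 + c * S := by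
    nlinarith [hs T, mul_le_mul_of_nonneg_left hQ hb.le]
  have hbT : (0:ℝ) < b * T := mul_pos hb hT0
  rcases le_or_gt (b * m) c with hcase | hcase
  · have h1 : m ≤ c / b := by rw [le_div_iff₀ hb]; linarith
    have h2 : (0:ℝ) ≤ (1+a)^T / (b*T) * s 0 := mul_nonneg (div_nonneg (pow_nonneg ha1 T) hbT.le) (hs 0)
    linarith
  · have h3 : (b*m - c) * T ≤ (b*m - c) * S :=
      mul_le_mul_of_nonneg_left hTS (by linarith)
    have h4 : b * m * (T:ℝ) ≤ (1+a)^T * s 0 + c * T := by nlinarith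
    have h5 : m ≤ ((1+a)^T * s 0 + c*T)/(b*T) := by
      rw [le_div_iff₀ hbT]; linarith
    have h6 : ((1+a)^T * s 0 + c*(T:ℝ))/(b*T) = (1+a)^T/(b*T)*s 0 + c/b := by
      field_simp
    linarith [h6 ▸ h5]
end

section
/- Let each f_i : ℝ^p → ℝ (i = 1,…,n) be L-smooth and bounded below with f_i^* := inf f_i > −∞, and set f := (1/n)∑_{i=1}^n f_i, f^* := inf f, σ_f^* := f^* − (1/n)∑_{i=1}^n f_i^*. Then for any points x_1, …, x_n ∈ ℝ^p with average x̄ := (1/n)∑_{i=1}^n x_i: (1/n)∑_{i=1}^n (f_i(x_i) − f_i^*) ≤ 2(f(x̄) − f^*) + 2σ_f^* + (L/n)∑_{i=1}^n ‖x_i − x̄‖². -/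
open Finset intervalIntegral

noncomputable section

lemma descent_lemma {p : ℕ} (L : ℝ) (hL : 0 < L) (f : EuclideanSpace ℝ (Fin p) → ℝ)
    (hdiff : Differentiable ℝ f)
    (hsm : ∀ u v, ‖gradient f u - gradient f v‖ ≤ L * ‖u - v‖)
    (x y : EuclideanSpace ℝ (Fin p)) :
    f y ≤ f x + inner ℝ (gradient f x) (y - x) + L / 2 * ‖y - x‖ ^ 2 := by
  set d := y - x with hd
  have hderiv : ∀ t : ℝ, HasDerivAt (fun t : ℝ => f (x + t • d))
      (inner ℝ (gradient f (x + t • d)) d : ℝ) t := by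
    intro t
    have h2 : HasDerivAt (fun t : ℝ => x + t • d) d t := by
      simpa using ((hasDerivAt_id t).smul_const d).const_add x
    have h1 := ((hdiff (x + t • d)).hasGradientAt).hasFDerivAt
    have := h1.comp_hasDerivAt t h2
    simpa [InnerProductSpace.toDual_apply_apply, Function.comp_def] using this
  have hcont : Continuous fun t : ℝ => (inner ℝ (gradient f (x + t • d)) d : ℝ) := by
    have hgl : LipschitzWith (Real.toNNReal L) (gradient f) := by
      apply LipschitzWith.of_dist_le_mul
      intro u v
      simpa [dist_eq_norm, Real.coe_toNNReal _ hL.le] using hsm u v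
    exact (Continuous.inner (hgl.continuous.comp (by continuity)) continuous_const)
  have hftc : f y - f x = ∫ t in (0:ℝ)..1, (inner ℝ (gradient f (x + t • d)) d : ℝ) := by
    have := intervalIntegral.integral_eq_sub_of_hasDerivAt (fun t _ => hderiv t)
      (hcont.intervalIntegrable 0 1)
    rw [this]
    simp [hd]
  have hbound : (∫ t in (0:ℝ)..1, (inner ℝ (gradient f (x + t • d)) d : ℝ))
      ≤ ∫ t in (0:ℝ)..1, ((inner ℝ (gradient f x) d : ℝ) + L * t * ‖d‖ ^ 2) := by
    apply intervalIntegral.integral_mono_on zero_le_one (hcont.intervalIntegrable 0 1)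
    · exact ((continuous_const.add ((continuous_const.mul continuous_id).mul
        continuous_const)).intervalIntegrable 0 1)
    · intro t ht
      have h1 : (inner ℝ (gradient f (x + t • d)) d : ℝ)
          = inner ℝ (gradient f x) d + inner ℝ (gradient f (x + t • d) - gradient f x) d := by
        rw [inner_sub_left]; ring
      rw [h1]
      gcongr
      calc (inner ℝ (gradient f (x + t • d) - gradient f x) d : ℝ)
          ≤ ‖gradient f (x + t • d) - gradient f x‖ * ‖d‖ := real_inner_le_norm _ _
        _ ≤ (L * ‖(x + t • d) - x‖) * ‖d‖ := by gcongr; exact hsm _ _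
        _ = L * (|t| * ‖d‖) * ‖d‖ := by simp [norm_smul]
        _ = L * t * ‖d‖ ^ 2 := by rw [abs_of_nonneg ht.1]; ring
  have h2 : (∫ t in (0:ℝ)..1, L * t * ‖d‖ ^ 2) = L / 2 * ‖d‖ ^ 2 := by
    have he : (fun t : ℝ => L * t * ‖d‖ ^ 2) = fun t : ℝ => (L * ‖d‖ ^ 2) * t := by
      funext t; ring
    rw [he, intervalIntegral.integral_const_mul]
    simp [integral_id]
    ring
  have hint : (∫ t in (0:ℝ)..1, ((inner ℝ (gradient f x) d : ℝ) + L * t * ‖d‖ ^ 2))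
      = inner ℝ (gradient f x) d + L / 2 * ‖d‖ ^ 2 := by
    rw [intervalIntegral.integral_add (intervalIntegrable_const)
      (by apply Continuous.intervalIntegrable; continuity), h2]
    simp
  linarith [hftc ▸ (hbound.trans_eq hint), hftc]

lemma grad_sq_bound {p : ℕ} (L : ℝ) (hL : 0 < L) (f : EuclideanSpace ℝ (Fin p) → ℝ)
    (hdiff : Differentiable ℝ f)
    (hsm : ∀ u v, ‖gradient f u - gradient f v‖ ≤ L * ‖u - v‖)
    (fs : ℝ) (hfs : IsGLB (Set.range f) fs) (x : EuclideanSpace ℝ (Fin p)) :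
    ‖gradient f x‖ ^ 2 ≤ 2 * L * (f x - fs) := by
  set g := gradient f x with hg
  have hdes := descent_lemma L hL f hdiff hsm x (x - L⁻¹ • g)
  have hlb : fs ≤ f (x - L⁻¹ • g) := hfs.1 ⟨_, rfl⟩
  have h1 : (x - L⁻¹ • g) - x = -(L⁻¹ • g) := by abel
  rw [h1] at hdes
  have h2 : (inner ℝ g (-(L⁻¹ • g)) : ℝ) = -(L⁻¹ * ‖g‖ ^ 2) := by
    rw [inner_neg_right, real_inner_smul_right, real_inner_self_eq_norm_sq]
  have h3 : ‖-(L⁻¹ • g)‖ ^ 2 = L⁻¹ ^ 2 * ‖g‖ ^ 2 := by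
    rw [norm_neg, norm_smul, Real.norm_eq_abs, abs_of_nonneg (inv_nonneg.mpr hL.le)]
    ring
  rw [h2, h3] at hdes
  have hL' : L ≠ 0 := hL.ne'
  have key : f (x - L⁻¹ • g) ≤ f x - ‖g‖ ^ 2 / (2 * L) := by
    have heq : f x + -(L⁻¹ * ‖g‖ ^ 2) + L / 2 * (L⁻¹ ^ 2 * ‖g‖ ^ 2)
        = f x - ‖g‖ ^ 2 / (2 * L) := by field_simp; ring
    linarith [hdes, heq]
  have : fs ≤ f x - ‖g‖ ^ 2 / (2 * L) := hlb.trans key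
  have h4 : ‖g‖ ^ 2 / (2 * L) ≤ f x - fs := by linarith
  calc ‖g‖ ^ 2 = (‖g‖ ^ 2 / (2 * L)) * (2 * L) := by field_simp
    _ ≤ (f x - fs) * (2 * L) := by
        apply mul_le_mul_of_nonneg_right h4; positivity
    _ = 2 * L * (f x - fs) := by ring

/-- bound on the averaged local suboptimality gaps
`(1/n) ∑ᵢ (fᵢ(xᵢ) − fᵢ^*)` in terms of the aggregate gap at the average point. -/
theorem avg_local_gap_bound (n p : ℕ) (hn : 0 < n) (L : ℝ) (hL : 0 < L)
    (f : Fin n → EuclideanSpace ℝ (Fin p) → ℝ)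
    (hdiff : ∀ i, Differentiable ℝ (f i))
    (hsmooth : ∀ i x x', ‖gradient (f i) x - gradient (f i) x'‖ ≤ L * ‖x - x'‖)
    (fStar : Fin n → ℝ) (hfStar : ∀ i, IsGLB (Set.range (f i)) (fStar i))
    (F : EuclideanSpace ℝ (Fin p) → ℝ) (hF : ∀ v, F v = (n : ℝ)⁻¹ * ∑ i, f i v)
    (Fstar : ℝ) (hFstar : IsGLB (Set.range F) Fstar)
    (sigf : ℝ) (hsigf : sigf = Fstar - (n : ℝ)⁻¹ * ∑ i, fStar i)
    (x : Fin n → EuclideanSpace ℝ (Fin p))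
    (xbar : EuclideanSpace ℝ (Fin p)) (hxbar : xbar = (n : ℝ)⁻¹ • ∑ i, x i) :
    (n : ℝ)⁻¹ * ∑ i, (f i (x i) - fStar i)
      ≤ 2 * (F xbar - Fstar) + 2 * sigf + (L / (n : ℝ)) * ∑ i, ‖x i - xbar‖ ^ 2 := by
  have key : ∀ i, f i (x i) - fStar i
      ≤ 2 * (f i xbar - fStar i) + L * ‖x i - xbar‖ ^ 2 := by
    intro i
    have hdes := descent_lemma L hL (f i) (hdiff i) (hsmooth i) xbar (x i)
    have hgsq := grad_sq_bound L hL (f i) (hdiff i) (hsmooth i) (fStar i) (hfStar i) xbar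
    have hin : (inner ℝ (gradient (f i) xbar) (x i - xbar) : ℝ)
        ≤ ‖gradient (f i) xbar‖ * ‖x i - xbar‖ := real_inner_le_norm _ _
    set G := ‖gradient (f i) xbar‖
    set D := ‖x i - xbar‖
    have hG : 0 ≤ G := norm_nonneg _
    have hD : 0 ≤ D := norm_nonneg _
    have hyoung : G * D ≤ G ^ 2 / (2 * L) + L / 2 * D ^ 2 := by
      rw [div_add' _ _ _ (by positivity), le_div_iff₀ (by positivity)]
      nlinarith [sq_nonneg (G - L * D)]
    have hGsq : G ^ 2 / (2 * L) ≤ f i xbar - fStar i := by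
      rw [div_le_iff₀ (by positivity)]
      nlinarith
    nlinarith [hdes, hin, hyoung, hGsq]
  have hn' : (0 : ℝ) < n := by exact_mod_cast hn
  have hsum : ∑ i, (f i (x i) - fStar i)
      ≤ 2 * ∑ i, f i xbar - 2 * ∑ i, fStar i + L * ∑ i, ‖x i - xbar‖ ^ 2 := by
    have h : ∑ i, (f i (x i) - fStar i) ≤ ∑ i, (2 * (f i xbar - fStar i) + L * ‖x i - xbar‖ ^ 2) := Finset.sum_le_sum (fun i _ => key i)
    calc ∑ i, (f i (x i) - fStar i)
        ≤ ∑ i, (2 * (f i xbar - fStar i) + L * ‖x i - xbar‖ ^ 2) := h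
      _ = 2 * ∑ i, f i xbar - 2 * ∑ i, fStar i + L * ∑ i, ‖x i - xbar‖ ^ 2 := by
          rw [Finset.sum_add_distrib, ← Finset.mul_sum, ← Finset.mul_sum,
            Finset.sum_sub_distrib]
          ring
  rw [hF, hsigf]
  calc (n : ℝ)⁻¹ * ∑ i, (f i (x i) - fStar i)
      ≤ (n : ℝ)⁻¹ * (2 * ∑ i, f i xbar - 2 * ∑ i, fStar i + L * ∑ i, ‖x i - xbar‖ ^ 2) :=
        mul_le_mul_of_nonneg_left hsum (inv_nonneg.mpr hn'.le)
    _ = 2 * ((n : ℝ)⁻¹ * ∑ i, f i xbar - Fstar) + 2 * (Fstar - (n : ℝ)⁻¹ * ∑ i, fStar i)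
        + (L / (n : ℝ)) * ∑ i, ‖x i - xbar‖ ^ 2 := by ring
end
end
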